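/- For any vector r ∈ ℝ^{N−1} with entries r_2,…,r_N, the polynomial λ(τ) = ∑_{i=1}^N (A† r)_i L_i(τ) satisfies λ'(1) = −∑_{i=2}^{N−1} M_i(1) r_i. -/

import Mathlib

open Polynomial

/-- `lagL τ i` is the `i`-th Lagrange basis polynomial (of degree `N - 1`)
for the nodes `τ 0, …, τ (N-1)`, satisfying `(lagL τ i).eval (τ j) = δᵢⱼ`. -/
noncomputable def lagL {N : ℕ} (τ : Fin N → ℝ) (i : Fin N) : ℝ[X] :=
  Lagrange.basis Finset.univ τ i

/-- `lagLp τ` is the polynomial `L_p(x) = ∏ᵢ (x - τᵢ)`. -/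
noncomputable def lagLp {N : ℕ} (τ : Fin N → ℝ) : ℝ[X] :=
  ∏ i, (X - C (τ i))

/-- The differentiation matrix `D`, with `D i j = L_j'(τ i)`. -/
noncomputable def matD {N : ℕ} (τ : Fin N → ℝ) : Matrix (Fin N) (Fin N) ℝ :=
  fun i j => (derivative (lagL τ j)).eval (τ i)

/-- The vector `D_p`, with `(D_p) i = L_p'(τ i)`. -/
noncomputable def vecDp {N : ℕ} (τ : Fin N → ℝ) : Fin N → ℝ :=
  fun i => (derivative (lagLp τ)).eval (τ i)

/-- Columns `2, …, N+1` (in 1-based numbering) of the augmented differentiation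
matrix `D̃ = [D  D_p]`: column `j` (0-based, `j < N - 1`) is column `j + 1` of `D`,
and the last column is `D_p`. -/
noncomputable def matDtil2 {N : ℕ} (τ : Fin N → ℝ) : Matrix (Fin N) (Fin N) ℝ :=
  fun i j => if h : (j : ℕ) + 1 < N then matD τ i ⟨(j : ℕ) + 1, h⟩ else vecDp τ i

/-- The quadrature rule with nodes `τ` and weights `w` integrates exactly all
polynomials of degree at most `2 * N - 3` over `[-1, 1]`. -/
def IsQuadrature {N : ℕ} (τ : Fin N → ℝ) (w : Fin N → ℝ) : Prop :=
  ∀ p : ℝ[X], p.natDegree ≤ 2 * N - 3 →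
    ∑ i, w i * p.eval (τ i) = ∫ t in (-1 : ℝ)..1, p.eval t

/-- The integration matrix `A` with rows indexed (0-based) by `i : Fin (N-1)`
corresponding to the node `τ (i+1)`: `A i j = ∫_{-1}^{τ (i+1)} L_j(t) dt`. -/
noncomputable def matA {N : ℕ} (τ : Fin N → ℝ) : Matrix (Fin (N - 1)) (Fin N) ℝ :=
  fun i j => ∫ t in (-1 : ℝ)..(τ ⟨(i : ℕ) + 1, by have := i.isLt; omega⟩), (lagL τ j).eval t

/-- The row vector `A_p`, with `(A_p) j = (1/N) ∏_{k ≠ j} 1 / (τ j - τ k)`. -/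
noncomputable def rowAp {N : ℕ} (τ : Fin N → ℝ) : Fin N → ℝ :=
  fun j => (1 / (N : ℝ)) * ∏ k ∈ Finset.univ.erase j, (τ j - τ k)⁻¹

/-- The matrix `Ã` obtained by stacking `A` on top of the row vector `A_p`. -/
noncomputable def matAtil {N : ℕ} (τ : Fin N → ℝ) : Matrix (Fin N) (Fin N) ℝ :=
  fun i j => if h : (i : ℕ) + 1 < N then matA τ ⟨(i : ℕ), by omega⟩ j else rowAp τ j

/-- The adjoint integration matrix `A† = W⁻¹ Aᵀ W_{2:N}`, with columns indexed
(0-based) by `j : Fin (N-1)` corresponding to the node `τ (j+1)`. -/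
noncomputable def matAdag {N : ℕ} (τ : Fin N → ℝ) (w : Fin N → ℝ) :
    Matrix (Fin N) (Fin (N - 1)) ℝ :=
  fun i j => (w i)⁻¹ * matA τ j i * w ⟨(j : ℕ) + 1, by have := j.isLt; omega⟩

/-- `polyM τ k` is the Lagrange basis polynomial (of degree `N - 3`) for the
interior nodes `τ 1, …, τ (N-2)`, satisfying `(polyM τ k).eval (τ m) = δₖₘ`
for interior indices `m`. -/
noncomputable def polyM {N : ℕ} (τ : Fin N → ℝ) (k : Fin N) : ℝ[X] :=
  Lagrange.basis (Finset.univ.filter fun m : Fin N => 0 < (m : ℕ) ∧ (m : ℕ) < N - 1) τ k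

/-- The polynomial `λ(x) = ∑ᵢ (A† r)ᵢ Lᵢ(x)`. -/
noncomputable def lamP {N : ℕ} (τ : Fin N → ℝ) (w : Fin N → ℝ) (r : Fin (N - 1) → ℝ) : ℝ[X] :=
  ∑ i, C ((matAdag τ w).mulVec r i) * lagL τ i

/-- Formal antiderivative of a polynomial. -/
noncomputable def pInt (p : ℝ[X]) : ℝ[X] := p.sum fun n a => C (a / (n + 1)) * X ^ (n + 1)

lemma derivative_pInt (p : ℝ[X]) : derivative (pInt p) = p := by
  unfold pInt
  rw [Polynomial.sum, map_sum]
  conv_rhs => rw [← Polynomial.sum_C_mul_X_pow_eq p, Polynomial.sum]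
  refine Finset.sum_congr rfl fun n _ => ?_
  rw [derivative_C_mul, derivative_X_pow, ← mul_assoc, ← C_mul, Nat.add_sub_cancel]
  congr 2
  push_cast
  field_simp

lemma natDegree_pInt_le (p : ℝ[X]) : (pInt p).natDegree ≤ p.natDegree + 1 := by
  unfold pInt
  rw [Polynomial.sum]
  refine natDegree_sum_le_of_forall_le _ _ fun n hn => ?_
  exact (natDegree_C_mul_X_pow_le _ _).trans (by
    have := Polynomial.le_natDegree_of_mem_supp n hn
    omega)

lemma integral_eval (p : ℝ[X]) (a b : ℝ) :
    ∫ t in a..b, p.eval t = (pInt p).eval b - (pInt p).eval a := by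
  have : ∀ x ∈ Set.uIcc a b, HasDerivAt (fun y => (pInt p).eval y) (p.eval x) x := by
    intro x _
    have h := (pInt p).hasDerivAt x
    rwa [derivative_pInt] at h
  exact intervalIntegral.integral_eq_sub_of_hasDerivAt this
    ((Polynomial.continuous p).intervalIntegrable _ _)

lemma integral_derivative_eval (p : ℝ[X]) (a b : ℝ) :
    ∫ t in a..b, (derivative p).eval t = p.eval b - p.eval a :=
  intervalIntegral.integral_eq_sub_of_hasDerivAt (fun x _ => p.hasDerivAt x)
    ((Polynomial.continuous _).intervalIntegrable _ _)

noncomputable def gPoly {N : ℕ} (τ w : Fin N → ℝ) : ℝ[X] :=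
  ∑ i, C ((derivative (lagL τ i)).eval 1 / w i) * lagL τ i

noncomputable def GPoly {N : ℕ} (τ w : Fin N → ℝ) : ℝ[X] :=
  pInt (gPoly τ w) - C ((pInt (gPoly τ w)).eval (-1))

variable {N : ℕ} (τ w : Fin N → ℝ)

lemma GPoly_eval (x : ℝ) :
    (GPoly τ w).eval x = ∫ t in (-1 : ℝ)..x, (gPoly τ w).eval t := by
  rw [integral_eval]; simp [GPoly]

lemma GPoly_eval_neg_one : (GPoly τ w).eval (-1) = 0 := by simp [GPoly]

lemma derivative_GPoly : derivative (GPoly τ w) = gPoly τ w := by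
  simp [GPoly, derivative_pInt]

lemma natDegree_gPoly_le (hinj : Set.InjOn τ ↑(Finset.univ : Finset (Fin N))) :
    (gPoly τ w).natDegree ≤ N - 1 := by
  refine natDegree_sum_le_of_forall_le _ _ fun i _ => (natDegree_C_mul_le _ _).trans ?_
  rw [lagL, Lagrange.natDegree_basis hinj (Finset.mem_univ i), Finset.card_univ,
    Fintype.card_fin]

lemma natDegree_GPoly_le (hN' : 1 ≤ N) (hinj : Set.InjOn τ ↑(Finset.univ : Finset (Fin N))) :
    (GPoly τ w).natDegree ≤ N := by
  refine (natDegree_sub_le _ _).trans (max_le ?_ (by simp))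
  refine (natDegree_pInt_le _).trans ?_
  refine (Nat.add_le_add_right (natDegree_gPoly_le τ w hinj) 1).trans ?_
  omega

lemma eval_gPoly_node (hinj : Set.InjOn τ ↑(Finset.univ : Finset (Fin N))) (j : Fin N) :
    (gPoly τ w).eval (τ j) = (derivative (lagL τ j)).eval 1 / w j := by
  rw [gPoly, eval_finset_sum, Finset.sum_eq_single_of_mem j (Finset.mem_univ j)]
  · rw [eval_mul, eval_C, lagL, Lagrange.eval_basis_self hinj (Finset.mem_univ j), mul_one]
  · intro k _ hkj
    rw [eval_mul, lagL, Lagrange.eval_basis_of_ne hkj (Finset.mem_univ j), mul_zero]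

lemma intA (hN : 3 ≤ N) (hmono : StrictMono τ) (hw : ∀ i, 0 < w i)
    (hquad : IsQuadrature τ w) (p : ℝ[X]) (hp : p.natDegree ≤ N - 2) :
    ∫ t in (-1 : ℝ)..1, ((gPoly τ w) * p).eval t = (derivative p).eval 1 := by
  have hinj : Set.InjOn τ ↑(Finset.univ : Finset (Fin N)) :=
    fun a _ b _ h => hmono.injective h
  have hdeg : ((gPoly τ w) * p).natDegree ≤ 2 * N - 3 :=
    natDegree_mul_le.trans (by have := natDegree_gPoly_le τ w hinj; omega)
  rw [← hquad _ hdeg]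
  have hterm : ∀ i, w i * ((gPoly τ w) * p).eval (τ i)
      = p.eval (τ i) * (derivative (lagL τ i)).eval 1 := by
    intro i
    rw [eval_mul, eval_gPoly_node τ w hinj i, ← mul_assoc, mul_div_assoc',
      mul_div_cancel_left₀ _ (hw i).ne', mul_comm]
  rw [Finset.sum_congr rfl fun i _ => hterm i]
  have hplt : p.degree < ((Finset.univ : Finset (Fin N)).card : WithBot ℕ) := by
    refine lt_of_le_of_lt degree_le_natDegree ?_
    rw [Finset.card_univ, Fintype.card_fin]
    exact_mod_cast (by omega : p.natDegree < N)
  have hp2 := Lagrange.eq_interpolate hinj hplt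
  conv_rhs => rw [hp2]
  rw [Lagrange.interpolate_apply, derivative_sum, eval_finset_sum]
  exact Finset.sum_congr rfl fun i _ => by rw [derivative_C_mul, eval_mul, eval_C]; rfl

lemma GPoly_eval_one (hN : 3 ≤ N) (hmono : StrictMono τ) (hw : ∀ i, 0 < w i)
    (hquad : IsQuadrature τ w) : (GPoly τ w).eval 1 = 0 := by
  have h := intA τ w hN hmono hw hquad 1 (by simp)
  rw [mul_one, derivative_one, eval_zero] at h
  rw [GPoly_eval]
  exact h

lemma intC (hN : 3 ≤ N) (hmono : StrictMono τ) (hw : ∀ i, 0 < w i)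
    (hquad : IsQuadrature τ w) (q : ℝ[X]) (hq : q.natDegree ≤ N - 3) :
    ∫ t in (-1 : ℝ)..1, ((GPoly τ w) * q).eval t = -(q.eval 1) := by
  have hA := intA τ w hN hmono hw hquad (pInt q) ((natDegree_pInt_le q).trans (by omega))
  rw [derivative_pInt] at hA
  have hIBP := integral_derivative_eval ((GPoly τ w) * pInt q) (-1) 1
  rw [derivative_mul, derivative_GPoly, derivative_pInt] at hIBP
  have hsplit : ∫ t in (-1 : ℝ)..1, ((gPoly τ w) * pInt q + (GPoly τ w) * q).eval t
      = (∫ t in (-1 : ℝ)..1, ((gPoly τ w) * pInt q).eval t)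
        + ∫ t in (-1 : ℝ)..1, ((GPoly τ w) * q).eval t := by
    simp only [eval_add]
    exact intervalIntegral.integral_add ((Polynomial.continuous _).intervalIntegrable _ _)
      ((Polynomial.continuous _).intervalIntegrable _ _)
  rw [hsplit, hA, eval_mul, eval_mul, GPoly_eval_one τ w hN hmono hw hquad,
    GPoly_eval_neg_one] at hIBP
  linarith

lemma nodeE (hN : 3 ≤ N) (hmono : StrictMono τ)
    (h0 : τ ⟨0, Nat.lt_of_lt_of_le (Nat.succ_pos 2) hN⟩ = -1)
    (h1 : τ ⟨N - 1, Nat.sub_lt (Nat.lt_of_lt_of_le (Nat.succ_pos 2) hN) Nat.one_pos⟩ = 1)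
    (hw : ∀ i, 0 < w i) (hquad : IsQuadrature τ w) (m : Fin N)
    (hm : m ∈ Finset.univ.filter fun k : Fin N => 0 < (k : ℕ) ∧ (k : ℕ) < N - 1) :
    w m * (GPoly τ w).eval (τ m) = -((polyM τ m).eval 1) := by
  have hinj : Set.InjOn τ ↑(Finset.univ : Finset (Fin N)) :=
    fun a _ b _ h => hmono.injective h
  set s := Finset.univ.filter fun k : Fin N => 0 < (k : ℕ) ∧ (k : ℕ) < N - 1 with hs
  have hsinj : Set.InjOn τ ↑s := fun a _ b _ h => hmono.injective h
  have hcard : s.card ≤ N - 2 := by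
    have hsub : s ⊆ (Finset.univ.erase ⟨0, by omega⟩).erase ⟨N - 1, by omega⟩ := by
      intro k hk
      rw [hs, Finset.mem_filter] at hk
      rw [Finset.mem_erase, Finset.mem_erase]
      refine ⟨fun h => by simp [Fin.ext_iff] at h; omega,
        fun h => by simp [Fin.ext_iff] at h; omega, Finset.mem_univ k⟩
    refine (Finset.card_le_card hsub).trans ?_
    have hmem : (⟨N - 1, by omega⟩ : Fin N) ∈ Finset.univ.erase ⟨0, by omega⟩ := by
      rw [Finset.mem_erase]
      exact ⟨by simp [Fin.ext_iff]; omega, Finset.mem_univ _⟩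
    rw [Finset.card_erase_of_mem hmem, Finset.card_erase_of_mem (Finset.mem_univ _),
      Finset.card_univ, Fintype.card_fin]
    omega
  have hmemcard : 1 ≤ s.card := Finset.card_pos.mpr ⟨m, hm⟩
  have hqdeg : (polyM τ m).natDegree ≤ N - 3 := by
    rw [polyM, ← hs, Lagrange.natDegree_basis hsinj hm]
    omega
  have hdeg : ((GPoly τ w) * polyM τ m).natDegree ≤ 2 * N - 3 :=
    natDegree_mul_le.trans (by have := natDegree_GPoly_le τ w (by omega) hinj; omega)
  have hD : ∑ i, w i * ((GPoly τ w * polyM τ m).eval (τ i)) = -((polyM τ m).eval 1) :=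
    (hquad _ hdeg).trans (intC τ w hN hmono hw hquad _ hqdeg)
  rw [← Finset.sum_filter_add_sum_filter_not Finset.univ
    (fun k : Fin N => 0 < (k : ℕ) ∧ (k : ℕ) < N - 1)] at hD
  have hbd : ∑ i ∈ Finset.univ.filter
      (fun k : Fin N => ¬(0 < (k : ℕ) ∧ (k : ℕ) < N - 1)),
      w i * ((GPoly τ w * polyM τ m).eval (τ i)) = 0 := by
    refine Finset.sum_eq_zero fun i hi => ?_
    rw [Finset.mem_filter] at hi
    have hlt := i.isLt
    have hcases : (i : ℕ) = 0 ∨ (i : ℕ) = N - 1 := by omega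
    rcases hcases with h | h
    · have : i = ⟨0, by omega⟩ := Fin.ext h
      rw [this, h0, eval_mul, GPoly_eval_neg_one, zero_mul, mul_zero]
    · have : i = ⟨N - 1, by omega⟩ := Fin.ext h
      rw [this, h1, eval_mul, GPoly_eval_one τ w hN hmono hw hquad, zero_mul, mul_zero]
  rw [hbd, add_zero, Finset.sum_eq_single_of_mem m hm] at hD
  · rw [eval_mul, polyM, ← hs, Lagrange.eval_basis_self hsinj hm, mul_one] at hD
    rw [polyM, ← hs]
    exact hD
  · intro k hk hkm
    rw [eval_mul, polyM, ← hs, Lagrange.eval_basis_of_ne (Ne.symm hkm) hk, mul_zero, mul_zero]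

variable {NN : ℕ}
lemma Geval_eq_sum (x : ℝ) :
    (GPoly τ w).eval x
      = ∑ i, ((derivative (lagL τ i)).eval 1 / w i) * ∫ t in (-1 : ℝ)..x, (lagL τ i).eval t := by
  rw [GPoly_eval]
  have heval : ∀ t : ℝ, (gPoly τ w).eval t
      = ∑ i, ((derivative (lagL τ i)).eval 1 / w i) * (lagL τ i).eval t := by
    intro t
    rw [gPoly, eval_finset_sum]
    simp [eval_mul, eval_C]
  simp only [heval]
  rw [intervalIntegral.integral_finset_sum
    (f := fun i t => ((derivative (lagL τ i)).eval 1 / w i) * (lagL τ i).eval t) (fun i _ =>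
    (continuous_const.mul (Polynomial.continuous _)).intervalIntegrable _ _)]
  exact Finset.sum_congr rfl fun i _ => intervalIntegral.integral_const_mul _ _


/-- `λ'(1) = -∑_{i=2}^{N-1} Mᵢ(1) rᵢ` (sum over the interior nodes). -/
theorem stmt10 (N : ℕ) (hN : 3 ≤ N) (τ : Fin N → ℝ) (hmono : StrictMono τ)
    (h0 : τ ⟨0, by omega⟩ = -1) (h1 : τ ⟨N - 1, by omega⟩ = 1) (w : Fin N → ℝ) (hw : ∀ i, 0 < w i) (hquad : IsQuadrature τ w) :
    ∀ r : Fin (N - 1) → ℝ,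
      (derivative (lamP τ w r)).eval 1 =
        - ∑ k ∈ Finset.univ.filter (fun k : Fin N => 0 < (k : ℕ) ∧ (k : ℕ) < N - 1),
            (polyM τ k).eval 1 * r ⟨(k : ℕ) - 1, by have := k.isLt; omega⟩ := by
  intro r
  have hstep : (derivative (lamP τ w r)).eval 1
      = ∑ j : Fin (N - 1),
          (w ⟨(j : ℕ) + 1, by have := j.isLt; omega⟩
            * (GPoly τ w).eval (τ ⟨(j : ℕ) + 1, by have := j.isLt; omega⟩)) * r j := by
    rw [lamP, derivative_sum, eval_finset_sum]
    simp only [derivative_C_mul, eval_mul, eval_C]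
    simp only [Matrix.mulVec, dotProduct, matAdag]
    simp only [Finset.sum_mul]
    rw [Finset.sum_comm]
    refine Finset.sum_congr rfl fun j _ => ?_
    rw [Geval_eq_sum τ w (τ ⟨(j : ℕ) + 1, by have := j.isLt; omega⟩), Finset.mul_sum,
      Finset.sum_mul]
    refine Finset.sum_congr rfl fun i _ => ?_
    have hA : matA τ j i
        = ∫ t in (-1 : ℝ)..(τ ⟨(j : ℕ) + 1, by have := j.isLt; omega⟩), (lagL τ i).eval t := rfl
    rw [hA, div_eq_mul_inv]
    ring
  rw [hstep]
  rw [← Finset.sum_filter_add_sum_filter_not Finset.univ (fun j : Fin (N - 1) => (j : ℕ) < N - 2)]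
  have h2 : ∑ j ∈ Finset.univ.filter (fun j : Fin (N - 1) => ¬((j : ℕ) < N - 2)),
      (w ⟨(j : ℕ) + 1, by have := j.isLt; omega⟩
        * (GPoly τ w).eval (τ ⟨(j : ℕ) + 1, by have := j.isLt; omega⟩)) * r j = 0 := by
    refine Finset.sum_eq_zero fun j hj => ?_
    rw [Finset.mem_filter] at hj
    have hlt := j.isLt
    have : (⟨(j : ℕ) + 1, by omega⟩ : Fin N) = ⟨N - 1, by omega⟩ := Fin.ext (by simp; omega)
    rw [this, h1, GPoly_eval_one τ w hN hmono hw hquad, mul_zero, zero_mul]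
  rw [h2, add_zero, ← Finset.sum_neg_distrib]
  refine Finset.sum_nbij' (fun j : Fin (N - 1) => (⟨(j : ℕ) + 1, by have := j.isLt; omega⟩ : Fin N))
    (fun k : Fin N => (⟨(k : ℕ) - 1, by have := k.isLt; omega⟩ : Fin (N - 1)))
    ?_ ?_ ?_ ?_ ?_
  · intro j hj
    rw [Finset.mem_filter] at hj ⊢
    exact ⟨Finset.mem_univ _, by simp; omega⟩
  · intro k hk
    rw [Finset.mem_filter] at hk ⊢
    refine ⟨Finset.mem_univ _, ?_⟩
    have := k.isLt
    simp
    omega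
  · intro j hj
    rw [Finset.mem_filter] at hj
    exact Fin.ext (by simp)
  · intro k hk
    rw [Finset.mem_filter] at hk
    exact Fin.ext (by simp; omega)
  · intro j hj
    rw [Finset.mem_filter] at hj
    have hmem : (⟨(j : ℕ) + 1, by have := j.isLt; omega⟩ : Fin N)
        ∈ Finset.univ.filter (fun k : Fin N => 0 < (k : ℕ) ∧ (k : ℕ) < N - 1) := by
      rw [Finset.mem_filter]
      exact ⟨Finset.mem_univ _, by simp; omega⟩
    rw [nodeE τ w hN hmono h0 h1 hw hquad _ hmem]
    have : (⟨((⟨(j : ℕ) + 1, by have := j.isLt; omega⟩ : Fin N) : ℕ) - 1,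
        by omega⟩ : Fin (N - 1)) = j := Fin.ext (by simp)
    rw [this]
    ring
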